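/- Let $\alpha,\beta\in W^{1,p}(I)$ be respectively a lower and an upper solution of the equation $(\Phi(a(t,x)x'))'=f(t,x,x')$ with $\alpha\le\beta$ on $I$, and suppose $a(0,x)\neq 0$ for all $x\in\mathbb{R}$. If $\alpha(0)=\beta(0)$, then $\mathcal{A}_\alpha(0)\le\mathcal{A}_\beta(0)$, where $\mathcal{A}_\alpha,\mathcal{A}_\beta$ are the continuous representatives of $t\mapsto a(t,\alpha(t))\alpha'(t)$ and $t\mapsto a(t,\beta(t))\beta'(t)$ respectively. -/

import Mathlib

open MeasureTheory Set Filter Topology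

noncomputable section

/-- `x ∈ W^{1,p}([0,T])` with (weak) derivative `x'`. -/
def MemW1p (T p : ℝ) (x x' : ℝ → ℝ) : Prop :=
  MemLp x (ENNReal.ofReal p) (volume.restrict (Icc (0:ℝ) T)) ∧
  MemLp x' (ENNReal.ofReal p) (volume.restrict (Icc (0:ℝ) T)) ∧
  ∀ t ∈ Icc (0:ℝ) T, x t = x 0 + ∫ s in (0:ℝ)..t, x' s

/-- The `W^{1,p}` norm of a function `x` with derivative `x'`. -/
def W1pNorm (T p : ℝ) (x x' : ℝ → ℝ) : ℝ :=
  (eLpNorm x (ENNReal.ofReal p) (volume.restrict (Icc (0:ℝ) T))).toReal +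
  (eLpNorm x' (ENNReal.ofReal p) (volume.restrict (Icc (0:ℝ) T))).toReal

/-- `x` (with derivative `x'`) is a solution of `(Φ(a(t,x)x'))' = f(t,x,x')` a.e. on `[0,T]`,
with `x ∈ W^{1,p}` and `t ↦ Φ(a(t,x(t))x'(t))` in `W^{1,1}`. -/
def IsSolODE (T p : ℝ) (Φ : ℝ → ℝ) (a : ℝ → ℝ → ℝ) (f : ℝ → ℝ → ℝ → ℝ)
    (x x' : ℝ → ℝ) : Prop :=
  MemW1p T p x x' ∧
  IntegrableOn (fun s => f s (x s) (x' s)) (Icc 0 T) ∧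
  ∃ c : ℝ, ∀ᵐ t ∂(volume.restrict (Icc (0:ℝ) T)),
    Φ (a t (x t) * x' t) = c + ∫ s in (0:ℝ)..t, f s (x s) (x' s)

/-- `α` (with derivative `α'`) is a lower solution of `(Φ(a(t,x)x'))' = f(t,x,x')`:
`α ∈ W^{1,1}`, `t ↦ Φ(a(t,α)α')` is in `W^{1,1}` and its derivative is `≥ f(t,α,α')` a.e. -/
def IsLowerSol (T : ℝ) (Φ : ℝ → ℝ) (a : ℝ → ℝ → ℝ) (f : ℝ → ℝ → ℝ → ℝ)
    (α α' : ℝ → ℝ) : Prop :=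
  IntegrableOn α' (Icc 0 T) ∧
  (∀ t ∈ Icc (0:ℝ) T, α t = α 0 + ∫ s in (0:ℝ)..t, α' s) ∧
  ∃ z : ℝ → ℝ, IntegrableOn z (Icc 0 T) ∧
    (∃ c : ℝ, ∀ᵐ t ∂(volume.restrict (Icc (0:ℝ) T)),
      Φ (a t (α t) * α' t) = c + ∫ s in (0:ℝ)..t, z s) ∧
    (∀ᵐ t ∂(volume.restrict (Icc (0:ℝ) T)), f t (α t) (α' t) ≤ z t)

/-- `β` (with derivative `β'`) is an upper solution of `(Φ(a(t,x)x'))' = f(t,x,x')`. -/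
def IsUpperSol (T : ℝ) (Φ : ℝ → ℝ) (a : ℝ → ℝ → ℝ) (f : ℝ → ℝ → ℝ → ℝ)
    (β β' : ℝ → ℝ) : Prop :=
  IntegrableOn β' (Icc 0 T) ∧
  (∀ t ∈ Icc (0:ℝ) T, β t = β 0 + ∫ s in (0:ℝ)..t, β' s) ∧
  ∃ z : ℝ → ℝ, IntegrableOn z (Icc 0 T) ∧
    (∃ c : ℝ, ∀ᵐ t ∂(volume.restrict (Icc (0:ℝ) T)),
      Φ (a t (β t) * β' t) = c + ∫ s in (0:ℝ)..t, z s) ∧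
    (∀ᵐ t ∂(volume.restrict (Icc (0:ℝ) T)), z t ≤ f t (β t) (β' t))

/-- If the lower and upper solutions `α ≤ β` agree at `0` and `a(0,·) ≠ 0`, then `𝒜_α(0) ≤ 𝒜_β(0)`. -/
theorem stmt8
    (T p : ℝ) (hT : 0 < T) (hp : 1 < p)
    (Φ : ℝ ≃ₜ ℝ) (hΦ : StrictMono ⇑Φ)
    (a : ℝ → ℝ → ℝ) (ha : Continuous fun q : ℝ × ℝ => a q.1 q.2)
    (h : ℝ → ℝ) (hhc : ContinuousOn h (Icc 0 T)) (hhnn : ∀ t ∈ Icc (0:ℝ) T, 0 ≤ h t)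
    (hhp : MemLp (fun t => (h t)⁻¹) (ENNReal.ofReal p) (volume.restrict (Icc (0:ℝ) T)))
    (hah : ∀ t ∈ Icc (0:ℝ) T, ∀ s : ℝ, h t ≤ a t s)
    (f : ℝ → ℝ → ℝ → ℝ)
    (hfmeas : ∀ u v : ℝ, Measurable fun t => f t u v)
    (hfcont : ∀ᵐ t ∂(volume.restrict (Icc (0:ℝ) T)), Continuous fun q : ℝ × ℝ => f t q.1 q.2)
    (α α' β β' : ℝ → ℝ)
    (hαW : MemW1p T p α α') (hβW : MemW1p T p β β')
    (hlow : IsLowerSol T (⇑Φ) a f α α') (hupp : IsUpperSol T (⇑Φ) a f β β')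
    (hαβ : ∀ t ∈ Icc (0:ℝ) T, α t ≤ β t)
    (ha0 : ∀ s : ℝ, a 0 s ≠ 0)
    (Aα Aβ : ℝ → ℝ)
    (hAαc : ContinuousOn Aα (Icc 0 T)) (hAβc : ContinuousOn Aβ (Icc 0 T))
    (hAαeq : ∀ᵐ t ∂(volume.restrict (Icc (0:ℝ) T)), Aα t = a t (α t) * α' t)
    (hAβeq : ∀ᵐ t ∂(volume.restrict (Icc (0:ℝ) T)), Aβ t = a t (β t) * β' t)
    (h0 : α 0 = β 0) :
    Aα 0 ≤ Aβ 0 := by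
  have h0mem : (0:ℝ) ∈ Icc (0:ℝ) T := ⟨le_refl _, hT.le⟩
  have hα'int : IntegrableOn α' (Icc 0 T) := hlow.1
  have hβ'int : IntegrableOn β' (Icc 0 T) := hupp.1
  have hαrep := hlow.2.1
  have hβrep := hupp.2.1
  -- continuity of α and β on [0,T]
  have hprimα : ContinuousOn (fun t => ∫ s in (0:ℝ)..t, α' s) (Icc 0 T) := by
    have := intervalIntegral.continuousOn_primitive_interval
      (f := α') (a := 0) (b := T) (μ := volume) (by rwa [uIcc_of_le hT.le])
    rwa [uIcc_of_le hT.le] at this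
  have hprimβ : ContinuousOn (fun t => ∫ s in (0:ℝ)..t, β' s) (Icc 0 T) := by
    have := intervalIntegral.continuousOn_primitive_interval
      (f := β') (a := 0) (b := T) (μ := volume) (by rwa [uIcc_of_le hT.le])
    rwa [uIcc_of_le hT.le] at this
  have hαc : ContinuousOn α (Icc 0 T) :=
    (continuousOn_const.add hprimα).congr hαrep
  have hβc : ContinuousOn β (Icc 0 T) :=
    (continuousOn_const.add hprimβ).congr hβrep
  have haα : ContinuousOn (fun t => a t (α t)) (Icc 0 T) :=
    ha.comp_continuousOn (f := fun t => (t, α t)) (ContinuousOn.prodMk continuousOn_id hαc)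
  have haβ : ContinuousOn (fun t => a t (β t)) (Icc 0 T) :=
    ha.comp_continuousOn (f := fun t => (t, β t)) (ContinuousOn.prodMk continuousOn_id hβc)
  -- argue by contradiction
  by_contra hcon
  push_neg at hcon
  -- positivity of a at 0
  have haα0 : 0 < a 0 (α 0) :=
    lt_of_le_of_ne ((hhnn 0 h0mem).trans (hah 0 h0mem (α 0))) (Ne.symm (ha0 (α 0)))
  have haβ0 : 0 < a 0 (β 0) :=
    lt_of_le_of_ne ((hhnn 0 h0mem).trans (hah 0 h0mem (β 0))) (Ne.symm (ha0 (β 0)))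
  set F : ℝ → ℝ := fun t =>
    min (Aα t * a t (β t) - Aβ t * a t (α t)) (min (a t (α t)) (a t (β t))) with hF
  have hFc : ContinuousOn F (Icc 0 T) :=
    ((hAαc.mul haβ).sub (hAβc.mul haα)).inf (haα.inf haβ)
  have hF0 : 0 < F 0 := by
    have hg0 : 0 < Aα 0 * a 0 (β 0) - Aβ 0 * a 0 (α 0) := by
      rw [h0]
      nlinarith
    simp only [hF, lt_min_iff]
    exact ⟨hg0, haα0, haβ0⟩
  have hev : ∀ᶠ t in 𝓝[Icc (0:ℝ) T] 0, 0 < F t :=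
    (hFc 0 h0mem).eventually (eventually_gt_nhds hF0)
  rw [Filter.eventually_iff, Metric.mem_nhdsWithin_iff] at hev
  obtain ⟨ε, hε, hball⟩ := hev
  set δ : ℝ := min (ε / 2) T with hδdef
  have hδ : 0 < δ := lt_min (half_pos hε) hT
  have hδT : δ ≤ T := min_le_right _ _
  have hδmem : δ ∈ Icc (0:ℝ) T := ⟨hδ.le, hδT⟩
  have hsubI : Icc (0:ℝ) δ ⊆ Icc (0:ℝ) T := Icc_subset_Icc_right hδT
  have hFpos : ∀ t ∈ Icc (0:ℝ) δ, 0 < F t := by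
    intro t ht
    have habs : |t| < ε := by
      rw [abs_of_nonneg ht.1]
      have : t ≤ ε / 2 := le_trans ht.2 (min_le_left _ _)
      linarith
    exact hball ⟨by simpa [Metric.mem_ball, Real.dist_eq] using habs, hsubI ht⟩
  -- a.e. on Ioc 0 δ, α' > β'
  have hsub : Ioc (0:ℝ) δ ⊆ Icc (0:ℝ) T := Ioc_subset_Icc_self.trans hsubI
  have hmono : volume.restrict (Ioc (0:ℝ) δ) ≤ volume.restrict (Icc (0:ℝ) T) :=
    Measure.restrict_mono hsub le_rfl
  have hAα' : ∀ᵐ t ∂(volume.restrict (Ioc (0:ℝ) δ)), Aα t = a t (α t) * α' t :=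
    ae_mono hmono hAαeq
  have hAβ' : ∀ᵐ t ∂(volume.restrict (Ioc (0:ℝ) δ)), Aβ t = a t (β t) * β' t :=
    ae_mono hmono hAβeq
  have hkey : ∀ᵐ t ∂(volume.restrict (Ioc (0:ℝ) δ)), 0 < α' t - β' t := by
    filter_upwards [hAα', hAβ', ae_restrict_mem measurableSet_Ioc] with t hA hB ht
    have htF := hFpos t (Ioc_subset_Icc_self ht)
    simp only [hF, lt_min_iff] at htF
    obtain ⟨h1, h2, h3⟩ := htF
    rw [hA, hB] at h1
    nlinarith [mul_pos h2 h3]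
  -- integrability on Ioc 0 δ
  have hint1 : Integrable α' (volume.restrict (Ioc (0:ℝ) δ)) := hα'int.mono_set hsub
  have hint2 : Integrable β' (volume.restrict (Ioc (0:ℝ) δ)) := hβ'int.mono_set hsub
  have hintg : Integrable (fun t => α' t - β' t) (volume.restrict (Ioc (0:ℝ) δ)) :=
    hint1.sub hint2
  -- positive integral
  have hμsupp : 0 < (volume.restrict (Ioc (0:ℝ) δ)) (Function.support fun t => α' t - β' t) := by
    by_contra hz
    push_neg at hz
    have hz0 : (volume.restrict (Ioc (0:ℝ) δ)) (Function.support fun t => α' t - β' t) = 0 :=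
      le_antisymm hz zero_le
    have hnull : (volume.restrict (Ioc (0:ℝ) δ)) {t | ¬ 0 < α' t - β' t} = 0 :=
      ae_iff.mp hkey
    have hcompl : (volume.restrict (Ioc (0:ℝ) δ)) (Function.support fun t => α' t - β' t)ᶜ = 0 := by
      refine measure_mono_null ?_ hnull
      intro t ht
      have ht' : α' t - β' t = 0 := by simpa [Function.mem_support] using ht
      simp only [mem_setOf_eq, not_lt]
      linarith
    have huniv : (volume.restrict (Ioc (0:ℝ) δ)) univ = 0 := by
      have := measure_univ_le_add_compl (μ := volume.restrict (Ioc (0:ℝ) δ))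
        (s := Function.support fun t => α' t - β' t)
      rw [hz0, hcompl] at this
      simpa using this
    rw [Measure.restrict_apply_univ, Real.volume_Ioc] at huniv
    simp only [ENNReal.ofReal_eq_zero] at huniv
    linarith
  have hIpos : 0 < ∫ t, (α' t - β' t) ∂(volume.restrict (Ioc (0:ℝ) δ)) := by
    rw [integral_pos_iff_support_of_nonneg_ae (hkey.mono fun t ht => ht.le) hintg]
    exact hμsupp
  rw [integral_sub hint1 hint2] at hIpos
  -- compare with α ≤ β at δ
  have hαδ := hαrep δ hδmem
  have hβδ := hβrep δ hδmem
  have hαβδ := hαβ δ hδmem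
  rw [intervalIntegral.integral_of_le hδ.le] at hαδ hβδ
  rw [hαδ, hβδ, h0] at hαβδ
  have : (∫ t, β' t ∂(volume.restrict (Ioc (0:ℝ) δ))) < ∫ t, α' t ∂(volume.restrict (Ioc (0:ℝ) δ)) := by
    linarith
  linarith [hαβδ]
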